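/- arXiv:0901.0678 — 2 statements merged into one kernel-verified Lean document; each statement's English description precedes it below -/
import Mathlib

section
/- Let Γ be a countable group with Kazhdan constants (K, ε): for every unitary Γ-representation π with a (K, ε)-almost invariant unit vector there is an invariant unit vector w with ‖v − w‖ < 1/4. Let Γ ↷ (X, μ) be an ergodic probability-measure-preserving action, Λ a countable group, and α, β : Γ × X → Λ measurable cocycles such that μ{x : α(g,x) = β(g,x)} > 1 − ε²/2 for all g ∈ K. Then there exists a measurable map f : X → Λ with β(g,x) = f(gx)⁻¹ α(g,x) f(x) almost everywhere, and moreover μ{x : f(x) = e} > 3/4. -/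
open MeasureTheory
open scoped ENNReal

section Helpers

set_option linter.unusedSectionVars false

variable {Λ : Type} [Group Λ] [Countable Λ] [MeasurableSpace Λ] [DiscreteMeasurableSpace Λ]

instance countSFinite : SFinite (Measure.count : Measure Λ) := by
  unfold Measure.count; infer_instance

lemma count_preimage_equiv (e : Λ ≃ Λ) (A : Set Λ) :
    Measure.count (e ⁻¹' A) = Measure.count A := by
  have h : e ⁻¹' A = e.symm '' A := by
    rw [Equiv.image_eq_preimage_symm]; simp
  rw [h]
  exact Measure.count_injective_image e.symm.injective A

lemma skew_mp {X : Type} [MeasurableSpace X]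
    {μ : Measure X} {σ : X → X} (hσ : MeasurePreserving σ μ μ)
    {c d : X → Λ} (hc : Measurable c) (hd : Measurable d) :
    MeasurePreserving (fun y : X × Λ => (σ y.1, c y.1 * y.2 * d y.1))
      (μ.prod Measure.count) (μ.prod Measure.count) := by
  set T : X × Λ → X × Λ := fun y => (σ y.1, c y.1 * y.2 * d y.1) with hT
  have hTm : Measurable T := by
    apply Measurable.prod
    · exact hσ.measurable.comp measurable_fst
    · exact (measurable_of_countable (fun q : Λ × Λ × Λ => q.1 * q.2.1 * q.2.2)).comp
        (((hc.comp measurable_fst)).prodMk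
          (measurable_snd.prodMk (hd.comp measurable_fst)))
  refine ⟨hTm, ?_⟩
  refine Measure.ext fun S hS => ?_
  rw [Measure.map_apply hTm hS, Measure.prod_apply (hTm hS), Measure.prod_apply hS]
  have key : ∀ x : X, Measure.count (Prod.mk x ⁻¹' (T ⁻¹' S))
      = Measure.count (Prod.mk (σ x) ⁻¹' S) := by
    intro x
    have h1 : Prod.mk x ⁻¹' (T ⁻¹' S)
        = ((Equiv.mulLeft (c x)).trans (Equiv.mulRight (d x))) ⁻¹' (Prod.mk (σ x) ⁻¹' S) := by
      ext l
      simp [T, Set.mem_preimage, Equiv.trans_apply]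
    rw [h1, count_preimage_equiv]
  calc ∫⁻ x, Measure.count (Prod.mk x ⁻¹' (T ⁻¹' S)) ∂μ
      = ∫⁻ x, Measure.count (Prod.mk (σ x) ⁻¹' S) ∂μ := by simp_rw [key]
    _ = ∫⁻ x, Measure.count (Prod.mk x ⁻¹' S) ∂μ :=
        hσ.lintegral_comp (measurable_measure_prodMk_left hS)

lemma norm_indicatorConstLp_sub_lt {Y : Type} [MeasurableSpace Y] {ν : Measure Y}
    {s t : Set Y} (hs : MeasurableSet s) (ht : MeasurableSet t)
    (hνs : ν s ≠ ∞) (hνt : ν t ≠ ∞) {ε : ℝ} (hε : 0 < ε)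
    (h : ν (symmDiff s t) < ENNReal.ofReal (ε ^ 2)) :
    ‖indicatorConstLp 2 hs hνs (1 : ℂ) - indicatorConstLp 2 ht hνt 1‖ < ε := by
  have hst : MeasurableSet (symmDiff s t) := (hs.diff ht).union (ht.diff hs)
  set u : Lp ℂ 2 ν := indicatorConstLp 2 hs hνs (1 : ℂ) - indicatorConstLp 2 ht hνt 1 with hu
  have hcoe : ⇑u
      =ᵐ[ν] fun y => s.indicator (fun _ => (1:ℂ)) y - t.indicator (fun _ => 1) y := by
    filter_upwards [Lp.coeFn_sub (indicatorConstLp 2 hs hνs (1 : ℂ))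
      (indicatorConstLp 2 ht hνt 1), indicatorConstLp_coeFn (p := 2) (hs := hs) (hμs := hνs)
        (c := (1:ℂ)), indicatorConstLp_coeFn (p := 2) (hs := ht) (hμs := hνt) (c := (1:ℂ))]
      with y h1 h2 h3
    simp only [hu, h1, Pi.sub_apply, h2, h3]
  show ‖u‖ < ε
  rw [Lp.norm_def, eLpNorm_congr_ae hcoe,
    eLpNorm_eq_lintegral_rpow_enorm_toReal (by norm_num) (by norm_num)]
  simp only [enorm_eq_nnnorm]
  have hpt : ∀ y : Y, (‖s.indicator (fun _ => (1:ℂ)) y - t.indicator (fun _ => 1) y‖₊ : ℝ≥0∞)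
        ^ (2 : ℝ≥0∞).toReal
      = (symmDiff s t).indicator (fun _ => (1:ℝ≥0∞)) y := by
    intro y
    by_cases hy_s : y ∈ s <;> by_cases hy_t : y ∈ t <;>
      simp [Set.indicator_apply, hy_s, hy_t, symmDiff_def, Set.mem_union, Set.mem_diff]
  simp_rw [hpt]
  rw [lintegral_indicator hst]
  simp only [MeasureTheory.setLIntegral_const, one_mul]
  have h2 : ν (symmDiff s t) ^ (1 / (2 : ℝ≥0∞).toReal) < ENNReal.ofReal ε := by
    have := ENNReal.rpow_lt_rpow h (z := 1 / (2 : ℝ≥0∞).toReal) (by norm_num)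
    refine lt_of_lt_of_le this (le_of_eq ?_)
    rw [show ENNReal.ofReal (ε ^ 2) = (ENNReal.ofReal ε) ^ (2:ℕ) from by
      rw [ENNReal.ofReal_pow hε.le]]
    rw [← ENNReal.rpow_natCast (ENNReal.ofReal ε) 2, ← ENNReal.rpow_mul]
    norm_num
  exact ENNReal.toReal_lt_of_lt_ofReal h2

end Helpers

/-- **Local rigidity of cocycles for Kazhdan groups (after Hjorth / Popa).**
Let `Γ` be a countable group with Kazhdan constants `(K, ε)`: for every unitary
`Γ`-representation with a `(K, ε)`-almost invariant unit vector there is an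
invariant unit vector `w` with `‖v − w‖ < 1/4`.  Let `Γ ↷ (X, μ)` be an ergodic
p.m.p. action, `Λ` a countable group, and `α, β : Γ × X → Λ` measurable cocycles with
`μ {x : α(g,x) = β(g,x)} > 1 − ε²/2` for every `g ∈ K`.  Then `β = α^f` for some
measurable `f : X → Λ`, and moreover `μ {x : f x = e} > 3/4`. -/
theorem local_rigidity_of_cocycles
    {Γ : Type} [Group Γ] [Countable Γ]
    (K : Set Γ) (ε : ℝ) (hε : 0 < ε)
    -- `(K, ε)` are Kazhdan constants for `Γ`:
    (hKazhdan : ∀ (H : Type) (_ : NormedAddCommGroup H) (_ : InnerProductSpace ℂ H)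
      (_ : CompleteSpace H) (π : Γ →* (H ≃ₗᵢ[ℂ] H)) (v : H), ‖v‖ = 1 →
      (∀ g ∈ K, ‖v - π g v‖ < ε) →
      ∃ w : H, ‖w‖ = 1 ∧ (∀ g : Γ, π g w = w) ∧ ‖v - w‖ < 1/4)
    {X : Type} [MeasurableSpace X] (μ : Measure X) [IsProbabilityMeasure μ]
    [MulAction Γ X]
    (hmp : ∀ g : Γ, MeasurePreserving (fun x : X => g • x) μ μ)
    (herg : ∀ S : Set X, MeasurableSet S →
      (∀ g : Γ, (fun x : X => g • x) ⁻¹' S = S) → μ S = 0 ∨ μ S = 1)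
    {Λ : Type} [Group Λ] [Countable Λ] [MeasurableSpace Λ] [DiscreteMeasurableSpace Λ]
    (α β : Γ → X → Λ)
    (hαmeas : ∀ g, Measurable (α g)) (hβmeas : ∀ g, Measurable (β g))
    (hαcoc : ∀ g₂ g₁ : Γ, ∀ᵐ x ∂μ, α (g₂ * g₁) x = α g₂ (g₁ • x) * α g₁ x)
    (hβcoc : ∀ g₂ g₁ : Γ, ∀ᵐ x ∂μ, β (g₂ * g₁) x = β g₂ (g₁ • x) * β g₁ x)
    (hclose : ∀ g ∈ K, ENNReal.ofReal (1 - ε ^ 2 / 2) < μ {x | α g x = β g x}) :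
    ∃ f : X → Λ, Measurable f ∧
      (∀ g : Γ, ∀ᵐ x ∂μ, β g x = (f (g • x))⁻¹ * α g x * f x) ∧
      ENNReal.ofReal (3 / 4) < μ {x | f x = 1} := by
  classical
  set ν : Measure (X × Λ) := μ.prod Measure.count with hν
  set T : Γ → X × Λ → X × Λ :=
    fun g y => (g • y.1, α g y.1 * y.2 * (β g y.1)⁻¹) with hTdef
  have hβinv_meas : ∀ g, Measurable fun x => (β g x)⁻¹ := fun g =>
    (measurable_of_countable (fun l : Λ => l⁻¹)).comp (hβmeas g)
  have hTmp : ∀ g, MeasurePreserving (T g) ν ν := fun g =>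
    skew_mp (hmp g) (hαmeas g) (hβinv_meas g)
  have hTmeas : ∀ g, Measurable (T g) := fun g => (hTmp g).measurable
  -- lift a.e. statements from μ to ν
  have aeLiftFst : ∀ {p : X → Prop}, (∀ᵐ x ∂μ, p x) → (∀ᵐ y ∂ν, p y.1) := by
    intro p hp
    rw [ae_iff] at hp ⊢
    have hset : {y : X × Λ | ¬ p y.1} = {x | ¬ p x} ×ˢ (Set.univ : Set Λ) := by
      ext y; simp
    rw [hset, hν, Measure.prod_prod, hp, zero_mul]
  -- a.e. multiplicativity of T
  have hTcomp : ∀ g h : Γ, ∀ᵐ y ∂ν, T g (T h y) = T (g * h) y := by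
    intro g h
    filter_upwards [aeLiftFst (hαcoc g h), aeLiftFst (hβcoc g h)] with y h1 h2
    have e1 : g • (h • y.1) = (g * h) • y.1 := (mul_smul g h y.1).symm
    simp only [hTdef]
    refine Prod.ext e1 ?_
    simp only [h1, h2, mul_inv_rev, mul_assoc]
  have hT1 : ∀ᵐ y ∂ν, T 1 y = y := by
    have hα1 : ∀ᵐ x ∂μ, α 1 x = 1 := by
      filter_upwards [hαcoc 1 1] with x hx
      rw [one_mul, one_smul] at hx
      exact (left_eq_mul.mp hx)
    have hβ1 : ∀ᵐ x ∂μ, β 1 x = 1 := by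
      filter_upwards [hβcoc 1 1] with x hx
      rw [one_mul, one_smul] at hx
      exact (left_eq_mul.mp hx)
    filter_upwards [aeLiftFst hα1, aeLiftFst hβ1] with y h1 h2
    simp [hTdef, h1, h2]
  -- the Hilbert space and the unitary representation
  set H := Lp ℂ 2 ν with hH
  set C : Γ → H → H := fun g F => Lp.compMeasurePreserving (T g) (hTmp g) F with hCdef
  have hCcoe : ∀ (g : Γ) (F : H), ⇑(C g F) =ᵐ[ν] ⇑F ∘ T g := fun g F =>
    Lp.coeFn_compMeasurePreserving F (hTmp g)
  have hCcomp : ∀ (g h : Γ) (F : H), C g (C h F) = C (h * g) F := by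
    intro g h F
    refine Lp.ext ?_
    have e2' : (⇑(C h F)) ∘ (T g) =ᵐ[ν] (⇑F ∘ T h) ∘ T g :=
      (hTmp g).quasiMeasurePreserving.ae_eq (hCcoe h F)
    have e3 : (⇑F ∘ T h) ∘ T g =ᵐ[ν] ⇑F ∘ T (h * g) := by
      filter_upwards [hTcomp h g] with y hy
      simp only [Function.comp_apply, hy]
    exact (hCcoe g (C h F)).trans (e2'.trans (e3.trans (hCcoe (h*g) F).symm))
  have hCone : ∀ F : H, C 1 F = F := by
    intro F
    refine Lp.ext ?_
    refine (hCcoe 1 F).trans ?_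
    filter_upwards [hT1] with y hy
    simp only [Function.comp_apply, hy]
  set Cli : Γ → (H →ₗᵢ[ℂ] H) := fun g => Lp.compMeasurePreservingₗᵢ ℂ (T g) (hTmp g)
    with hCli
  have hCliC : ∀ g F, Cli g F = C g F := fun g F => rfl
  set Φ : Γ → (H ≃ₗᵢ[ℂ] H) := fun g =>
    { toLinearEquiv := LinearEquiv.ofLinear (Cli g⁻¹).toLinearMap (Cli g).toLinearMap
        (by ext F
            simp only [LinearMap.coe_comp, Function.comp_apply, LinearMap.id_coe, id_eq,
              LinearIsometry.coe_toLinearMap, hCliC]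
            rw [hCcomp g⁻¹ g F, show g * g⁻¹ = 1 by group, hCone])
        (by ext F
            simp only [LinearMap.coe_comp, Function.comp_apply, LinearMap.id_coe, id_eq,
              LinearIsometry.coe_toLinearMap, hCliC]
            rw [hCcomp g g⁻¹ F, show g⁻¹ * g = 1 by group, hCone])
      norm_map' := fun F => (Cli g⁻¹).norm_map F } with hΦdef
  have hΦapp : ∀ (g : Γ) (F : H), Φ g F = C g⁻¹ F := fun g F => rfl
  have hΦsymm : ∀ (g : Γ) (F : H), (Φ g).symm F = C g F := fun g F => rfl
  have hπmul : ∀ a b : Γ, Φ (a * b) = Φ a * Φ b := by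
    intro a b
    apply LinearIsometryEquiv.ext
    intro F
    show Φ (a * b) F = Φ a (Φ b F)
    rw [hΦapp, hΦapp, hΦapp, hCcomp a⁻¹ b⁻¹ F, mul_inv_rev]
  -- the almost invariant vector
  set sA : Set (X × Λ) := (Set.univ : Set X) ×ˢ ({1} : Set Λ) with hsAdef
  have hsA : MeasurableSet sA := MeasurableSet.univ.prod (measurableSet_singleton 1)
  have hνsA : ν sA = 1 := by
    rw [hν, hsAdef, Measure.prod_prod, Measure.count_singleton, measure_univ, one_mul]
  have hνsA_ne : ν sA ≠ ∞ := by rw [hνsA]; exact ENNReal.one_ne_top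
  set v : H := indicatorConstLp 2 hsA hνsA_ne (1 : ℂ) with hvdef
  have hv1 : ‖v‖ = 1 := by
    rw [hvdef, norm_indicatorConstLp (by norm_num) (by norm_num)]
    simp [Measure.real, hνsA]
  have hmeasB : ∀ g : Γ, MeasurableSet {x | α g x = β g x} := by
    intro g
    have h0 : {x | α g x = β g x} = (fun x => (α g x, β g x)) ⁻¹' {q : Λ × Λ | q.1 = q.2} := rfl
    rw [h0]
    exact ((hαmeas g).prodMk (hβmeas g)) (Set.to_countable _).measurableSet
  have hΔ : ∀ g : Γ, ν (symmDiff sA (T g ⁻¹' sA)) = 2 * μ ({x | α g x = β g x}ᶜ) := by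
    intro g
    have hsymm_meas : MeasurableSet (symmDiff sA (T g ⁻¹' sA)) :=
      (hsA.diff ((hTmeas g) hsA)).union (((hTmeas g) hsA).diff hsA)
    rw [hν, Measure.prod_apply hsymm_meas]
    have key : ∀ x, Measure.count (Prod.mk x ⁻¹' (symmDiff sA (T g ⁻¹' sA)))
        = Set.indicator ({x | α g x = β g x}ᶜ) (fun _ => (2:ℝ≥0∞)) x := by
      intro x
      have hpre : Prod.mk x ⁻¹' (symmDiff sA (T g ⁻¹' sA))
          = symmDiff ({1} : Set Λ) {(α g x)⁻¹ * β g x} := by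
        ext l
        have hl : (α g x * l * (β g x)⁻¹ = 1) ↔ l = (α g x)⁻¹ * β g x := by
          constructor
          · intro hh
            have := congrArg (fun z => (α g x)⁻¹ * (z * β g x)) hh
            simpa [mul_assoc] using this
          · rintro rfl; group
        simp only [symmDiff_def, Set.mem_preimage, Set.sup_eq_union, Set.mem_union,
          Set.mem_diff, hsAdef, hTdef, Set.mem_prod, Set.mem_univ, true_and,
          Set.mem_singleton_iff]
        rw [hl]
      rw [hpre]
      by_cases hx : α g x = β g x
      · have h1 : (α g x)⁻¹ * β g x = 1 := by rw [← hx]; group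
        rw [h1]
        simp only [symmDiff_self, Set.bot_eq_empty, measure_empty]
        rw [Set.indicator_of_notMem (by simp [hx])]
      · have h1 : (α g x)⁻¹ * β g x ≠ 1 := by
          intro hh
          apply hx
          have := congrArg (fun z => α g x * z) hh
          simpa [mul_assoc] using this.symm
        have hdisj : Disjoint ({1} : Set Λ) {(α g x)⁻¹ * β g x} := by
          rw [Set.disjoint_singleton]
          exact fun hh => h1 hh.symm
        have h2 : symmDiff ({1} : Set Λ) {(α g x)⁻¹ * β g x}
            = {1} ∪ {(α g x)⁻¹ * β g x} := by
          rw [symmDiff_def]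
          ext l
          simp only [Set.sup_eq_union, Set.mem_union, Set.mem_diff, Set.mem_singleton_iff]
          constructor
          · rintro (⟨hh, _⟩ | ⟨hh, _⟩) <;> [left; right] <;> exact hh
          · rintro (rfl | rfl)
            · exact Or.inl ⟨rfl, fun hh => h1 hh.symm⟩
            · exact Or.inr ⟨rfl, fun hh => h1 hh⟩
        rw [h2, measure_union (by simpa using hdisj) (measurableSet_singleton _),
          Measure.count_singleton, Measure.count_singleton,
          Set.indicator_of_mem (by simp [hx])]
        norm_num
    simp_rw [key]
    rw [lintegral_indicator (hmeasB g).compl]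
    simp
  have hvπ : ∀ g ∈ K, ‖v - Φ g v‖ < ε := by
    intro g hg
    have hpre_ne : ν (T g ⁻¹' sA) ≠ ∞ := by
      rw [(hTmp g).measure_preimage hsA.nullMeasurableSet, hνsA]
      exact ENNReal.one_ne_top
    have hsymmv : (Φ g).symm v
        = indicatorConstLp 2 ((hTmeas g) hsA) hpre_ne (1:ℂ) := by
      rw [hΦsymm, hvdef, hCdef]
      exact Lp.indicatorConstLp_compMeasurePreserving hsA hνsA_ne 1 (hTmp g)
    have h1 : ‖v - Φ g v‖ = ‖(Φ g).symm v - v‖ := by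
      rw [← (Φ g).norm_map ((Φ g).symm v - v), map_sub, (Φ g).apply_symm_apply, norm_sub_rev]
    rw [h1, hsymmv, hvdef]
    apply norm_indicatorConstLp_sub_lt _ _ _ _ hε
    rw [symmDiff_comm, hΔ g]
    -- bound the measure of the bad set
    have hB := hclose g hg
    have hsum : μ {x | α g x = β g x} + μ ({x | α g x = β g x}ᶜ) = 1 :=
      by rw [measure_add_measure_compl (hmeasB g), measure_univ]
    have hle : (1:ℝ≥0∞) ≤ ENNReal.ofReal (1 - ε^2/2) + ENNReal.ofReal (ε^2/2) := by
      rw [← ENNReal.ofReal_one]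
      calc ENNReal.ofReal 1 = ENNReal.ofReal ((1 - ε^2/2) + ε^2/2) := by norm_num
      _ ≤ _ := ENNReal.ofReal_add_le
    have hlt : ENNReal.ofReal (1 - ε^2/2) + μ ({x | α g x = β g x}ᶜ)
        < ENNReal.ofReal (1 - ε^2/2) + ENNReal.ofReal (ε^2/2) := by
      calc ENNReal.ofReal (1 - ε^2/2) + μ ({x | α g x = β g x}ᶜ)
          < μ {x | α g x = β g x} + μ ({x | α g x = β g x}ᶜ) :=
            ENNReal.add_lt_add_right (measure_ne_top μ _) hB
        _ = 1 := hsum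
        _ ≤ _ := hle
    have hBc : μ ({x | α g x = β g x}ᶜ) < ENNReal.ofReal (ε^2/2) :=
      (ENNReal.add_lt_add_iff_left ENNReal.ofReal_ne_top).mp hlt
    calc 2 * μ ({x | α g x = β g x}ᶜ) < 2 * ENNReal.ofReal (ε^2/2) :=
          ENNReal.mul_lt_mul_right (a := 2) (by norm_num) (by norm_num) hBc
      _ = ENNReal.ofReal (ε^2) := by
          rw [show (2:ℝ≥0∞) = ENNReal.ofReal 2 from (ENNReal.ofReal_ofNat 2).symm,
            ← ENNReal.ofReal_mul (by norm_num : (0:ℝ) ≤ 2)]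
          congr 1
          ring
  -- apply the Kazhdan property
  obtain ⟨w, hw1, hwinv, hwv⟩ := hKazhdan H inferInstance inferInstance inferInstance
      (MonoidHom.mk' Φ hπmul) v hv1 (fun g hg => hvπ g hg)
  -- invariance of w
  have hwC : ∀ g : Γ, ⇑w ∘ T g =ᵐ[ν] ⇑w := by
    intro g
    have h1 : Φ g⁻¹ w = w := hwinv g⁻¹
    rw [hΦapp, inv_inv] at h1
    calc ⇑w ∘ T g =ᵐ[ν] ⇑(C g w) := (hCcoe g w).symm
      _ =ᵐ[ν] ⇑w := by rw [h1]
  -- a measurable representative of w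
  set W : X × Λ → ℂ := (Lp.aestronglyMeasurable w).mk ⇑w with hWdef
  have hWmeas : Measurable W := (Lp.aestronglyMeasurable w).stronglyMeasurable_mk.measurable
  have hWeq : ⇑w =ᵐ[ν] W := (Lp.aestronglyMeasurable w).ae_eq_mk
  have hfib : ∀ g : Γ, ∀ᵐ x ∂μ, ∀ l : Λ, W (g • x, α g x * l * (β g x)⁻¹) = W (x, l) := by
    intro g
    have h1 : W ∘ T g =ᵐ[ν] W :=
      (((hTmp g).quasiMeasurePreserving.ae_eq hWeq).symm.trans ((hwC g).trans hWeq))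
    filter_upwards [Measure.ae_ae_of_ae_prod h1] with x hx
    intro l
    have h3 : {l : Λ | ¬ (W ∘ T g) (x, l) = W (x, l)} = ∅ :=
      Measure.count_eq_zero_iff.mp (ae_iff.mp hx)
    by_contra hc
    have h4 : l ∈ {l : Λ | ¬ (W ∘ T g) (x, l) = W (x, l)} := by
      simp only [Set.mem_setOf_eq, Function.comp_apply, hTdef]
      exact hc
    rw [h3] at h4
    exact h4
  -- the fiberwise mass and the large points
  set P : X → ℝ≥0∞ := fun x => ∑' l : Λ, (‖W (x, l)‖₊ : ℝ≥0∞) ^ 2 with hPdef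
  have hWx : ∀ l : Λ, Measurable fun x => W (x, l) := fun l =>
    hWmeas.comp (measurable_id.prodMk measurable_const)
  have hPmeas : Measurable P := Measurable.ennreal_tsum fun l =>
    ((hWx l).nnnorm.coe_nnreal_ennreal.pow_const 2)
  set S : Λ → Set X := fun l => {x | P x < 2 * (‖W (x, l)‖₊ : ℝ≥0∞) ^ 2} with hSdef
  have hSmeas : ∀ l, MeasurableSet (S l) := fun l =>
    measurableSet_lt hPmeas (((hWx l).nnnorm.coe_nnreal_ennreal.pow_const 2).const_mul 2)
  have huniq : ∀ x l₁ l₂, x ∈ S l₁ → x ∈ S l₂ → l₁ = l₂ := by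
    intro x l₁ l₂ h1 h2
    by_contra hne
    have hsum : (‖W (x,l₁)‖₊:ℝ≥0∞)^2 + (‖W (x,l₂)‖₊:ℝ≥0∞)^2 ≤ P x := by
      have h3 := ENNReal.sum_le_tsum (f := fun l : Λ => (‖W (x,l)‖₊:ℝ≥0∞)^2) {l₁, l₂}
      rwa [Finset.sum_pair hne] at h3
    have h4 : P x + P x < P x + P x := by
      calc P x + P x < 2 * (‖W (x,l₁)‖₊:ℝ≥0∞)^2 + 2 * (‖W (x,l₂)‖₊:ℝ≥0∞)^2 :=
            ENNReal.add_lt_add h1 h2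
        _ = 2 * ((‖W (x,l₁)‖₊:ℝ≥0∞)^2 + (‖W (x,l₂)‖₊:ℝ≥0∞)^2) := (mul_add 2 _ _).symm
        _ ≤ 2 * P x := mul_le_mul_right hsum 2
        _ = P x + P x := two_mul _
    exact absurd h4 (lt_irrefl _)
  set D : Set X := {x | ∃ l, x ∈ S l} with hDdef
  set f : X → Λ := fun x => if hx : ∃ l, x ∈ S l then hx.choose else 1 with hfdef
  have hfS : ∀ x l, x ∈ S l → f x = l := by
    intro x l hl
    have hex : ∃ l', x ∈ S l' := ⟨l, hl⟩
    rw [hfdef]; simp only [dif_pos hex]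
    exact huniq x _ _ hex.choose_spec hl
  have hfmeas : Measurable f := by
    apply measurable_to_countable'
    intro l
    by_cases hl : l = 1
    · subst hl
      have h0 : f ⁻¹' {1} = S 1 ∪ (⋃ l', S l')ᶜ := by
        ext x
        simp only [Set.mem_preimage, Set.mem_singleton_iff, Set.mem_union, Set.mem_compl_iff,
          Set.mem_iUnion]
        constructor
        · intro hfx
          by_cases hx : ∃ l', x ∈ S l'
          · left
            have hspec := hx.choose_spec
            rw [hfdef] at hfx; simp only [dif_pos hx] at hfx
            rwa [hfx] at hspec
          · right; simpa using hx
        · intro h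
          rcases h with h | h
          · exact hfS x 1 h
          · rw [hfdef]; simp only
            rw [dif_neg (by simpa using h)]
      rw [h0]
      exact (hSmeas 1).union (MeasurableSet.iUnion hSmeas).compl
    · have h0 : f ⁻¹' {l} = S l := by
        ext x
        simp only [Set.mem_preimage, Set.mem_singleton_iff]
        constructor
        · intro hfx
          by_cases hx : ∃ l', x ∈ S l'
          · have hspec := hx.choose_spec
            rw [hfdef] at hfx; simp only [dif_pos hx] at hfx
            rwa [hfx] at hspec
          · rw [hfdef] at hfx; simp only [dif_neg hx] at hfx
            exact absurd hfx.symm hl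
        · exact hfS x l
      rw [h0]; exact hSmeas l
  -- transfer of largeness along the action
  have htrans : ∀ g : Γ, ∀ᵐ x ∂μ, ∀ l : Λ,
      (x ∈ S l ↔ g • x ∈ S (α g x * l * (β g x)⁻¹)) := by
    intro g
    filter_upwards [hfib g] with x hx
    have hPeq : P (g • x) = P x := by
      have he := Equiv.tsum_eq ((Equiv.mulLeft (α g x)).trans (Equiv.mulRight (β g x)⁻¹))
        (fun l => (‖W (g • x, l)‖₊ : ℝ≥0∞) ^ 2)
      rw [hPdef]
      simp only []
      rw [← he]
      apply tsum_congr
      intro l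
      simp only [Equiv.trans_apply, Equiv.coe_mulLeft, Equiv.coe_mulRight]
      rw [hx l]
    intro l
    simp only [hSdef, Set.mem_setOf_eq, hPeq, hx l]
  -- the quantitative estimate
  set V₀ : X × Λ → ℂ := fun y => if y.2 = 1 then 1 else 0 with hV₀def
  have hV₀meas : Measurable V₀ := by
    refine Measurable.ite ?_ measurable_const measurable_const
    exact measurable_snd (measurableSet_singleton 1)
  have hveq : ⇑v =ᵐ[ν] V₀ := by
    refine (indicatorConstLp_coeFn (p := 2) (hs := hsA) (hμs := hνsA_ne) (c := (1:ℂ))).trans ?_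
    refine Filter.Eventually.of_forall fun y => ?_
    simp only [Set.indicator_apply, hsAdef, Set.mem_prod, Set.mem_univ, true_and,
      Set.mem_singleton_iff, hV₀def]
  set R : X → ℝ≥0∞ := fun x => ∑' l : Λ, (‖V₀ (x,l) - W (x,l)‖₊ : ℝ≥0∞) ^ 2 with hRdef
  have hsub_meas : Measurable fun y => V₀ y - W y := hV₀meas.sub hWmeas
  have hRmeas : Measurable R := Measurable.ennreal_tsum fun l =>
    ((hsub_meas.comp (measurable_id.prodMk measurable_const)).nnnorm.coe_nnreal_ennreal.pow_const 2)
  have hint : ∫⁻ x, R x ∂μ = ∫⁻ y, (‖V₀ y - W y‖₊ : ℝ≥0∞) ^ 2 ∂ν := by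
    rw [hν, MeasureTheory.lintegral_prod _
      ((hsub_meas.nnnorm.coe_nnreal_ennreal.pow_const 2).aemeasurable)]
    apply lintegral_congr
    intro x
    rw [lintegral_count]
  have hN : ∫⁻ x, R x ∂μ < ENNReal.ofReal (1/16) := by
    rw [hint]
    have hc : ⇑(v - w) =ᵐ[ν] fun y => V₀ y - W y := by
      filter_upwards [Lp.coeFn_sub v w, hveq, hWeq] with y h1 h2 h3
      simp only [h1, Pi.sub_apply, h2, h3]
    set N := eLpNorm (fun y => V₀ y - W y) 2 ν with hNdef
    have hNeq : eLpNorm (⇑(v - w)) 2 ν = N := eLpNorm_congr_ae hc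
    have hNfin : N ≠ ∞ := by rw [← hNeq]; exact Lp.eLpNorm_ne_top (v - w)
    have hNlt : N < ENNReal.ofReal (1/4) := by
      rw [← ENNReal.ofReal_toReal hNfin]
      refine (ENNReal.ofReal_lt_ofReal_iff (by norm_num)).mpr ?_
      have : N.toReal = ‖v - w‖ := by rw [Lp.norm_def, hNeq]
      rw [this]
      exact hwv
    have hI : ∫⁻ y, (‖V₀ y - W y‖₊ : ℝ≥0∞) ^ 2 ∂ν = N ^ (2:ℝ) := by
      have hint2 : ∫⁻ y, (‖V₀ y - W y‖₊ : ℝ≥0∞) ^ (2:ℝ) ∂ν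
          = ∫⁻ y, (‖V₀ y - W y‖₊ : ℝ≥0∞) ^ 2 ∂ν := by
        apply lintegral_congr
        intro y
        rw [← ENNReal.rpow_natCast _ 2]
        norm_num
      rw [hNdef, eLpNorm_eq_lintegral_rpow_enorm_toReal (by norm_num) (by norm_num)]
      simp only [ENNReal.toReal_ofNat, enorm_eq_nnnorm]
      rw [← ENNReal.rpow_mul]
      norm_num
    rw [hI]
    calc N ^ (2:ℝ) < (ENNReal.ofReal (1/4)) ^ (2:ℝ) :=
          ENNReal.rpow_lt_rpow hNlt (by norm_num)
      _ = ENNReal.ofReal ((1/4:ℝ) ^ (2:ℝ)) := ENNReal.ofReal_rpow_of_pos (by norm_num)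
      _ = ENNReal.ofReal (1/16) := by
          rw [show ((1/4:ℝ) ^ (2:ℝ)) = ((1/4:ℝ)^(2:ℕ)) from by
            rw [← Real.rpow_natCast (1/4:ℝ) 2]; norm_num]
          norm_num
  set A : Set X := {x | ENNReal.ofReal (1/4) ≤ R x} with hAdef
  have hAmeas : MeasurableSet A := measurableSet_le measurable_const hRmeas
  have hAlt : μ A < ENNReal.ofReal (1/4) := by
    have hm := mul_meas_ge_le_lintegral₀ (μ := μ) hRmeas.aemeasurable (ENNReal.ofReal (1/4))
    have h16 : ENNReal.ofReal (1/16) = ENNReal.ofReal (1/4) * ENNReal.ofReal (1/4) := by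
      rw [← ENNReal.ofReal_mul (by norm_num)]; norm_num
    have hlt := lt_of_le_of_lt hm hN
    rw [h16] at hlt
    exact (ENNReal.mul_lt_mul_iff_right (ENNReal.ofReal_pos.mpr (by norm_num)).ne'
      ENNReal.ofReal_ne_top).mp hlt
  have hAc : ENNReal.ofReal (3/4) < μ Aᶜ := by
    by_contra hcon
    push_neg at hcon
    have h1 : μ A + μ Aᶜ = 1 := by
      rw [measure_add_measure_compl hAmeas, measure_univ]
    have h2 : μ A + μ Aᶜ < ENNReal.ofReal (1/4) + ENNReal.ofReal (3/4) :=
      lt_of_le_of_lt (add_le_add_right hcon _) (ENNReal.add_lt_add_right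
        ENNReal.ofReal_ne_top hAlt)
    rw [h1, ← ENNReal.ofReal_add (by norm_num) (by norm_num)] at h2
    norm_num at h2
  -- points outside A are large at the identity
  have hGS : ∀ x, x ∈ Aᶜ → x ∈ S 1 := by
    intro x hxA
    have hR : R x < ENNReal.ofReal (1/4) := lt_of_not_ge hxA
    have hsplitR : R x = (‖(1:ℂ) - W (x,1)‖₊ : ℝ≥0∞)^2
        + ∑' l : Λ, (if l = 1 then 0 else (‖W (x,l)‖₊:ℝ≥0∞)^2) := by
      rw [hRdef]
      simp only []
      rw [ENNReal.tsum_eq_add_tsum_ite 1]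
      congr 1
      · simp [hV₀def]
      · apply tsum_congr
        intro l
        by_cases hl : l = 1 <;> simp [hV₀def, hl]
    have hsplitP : P x = (‖W (x,1)‖₊ : ℝ≥0∞)^2
        + ∑' l : Λ, (if l = 1 then 0 else (‖W (x,l)‖₊:ℝ≥0∞)^2) := by
      rw [hPdef]
      simp only []
      rw [ENNReal.tsum_eq_add_tsum_ite 1]
    set a : ℝ≥0∞ := (‖(1:ℂ) - W (x,1)‖₊ : ℝ≥0∞) with hadef
    set b : ℝ≥0∞ := (‖W (x,1)‖₊ : ℝ≥0∞) with hbdef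
    set r : ℝ≥0∞ := ∑' l : Λ, (if l = 1 then 0 else (‖W (x,l)‖₊:ℝ≥0∞)^2) with hrdef
    have hquarter : ENNReal.ofReal (1/4) = ((2:ℝ≥0∞)⁻¹)^2 := by
      rw [show (1/4:ℝ) = (1/2)^2 by norm_num, ENNReal.ofReal_pow (by norm_num)]
      congr 1
      rw [show (1/2:ℝ) = (2:ℝ)⁻¹ by norm_num, ENNReal.ofReal_inv_of_pos (by norm_num)]
      norm_num
    have halt : a < 2⁻¹ := by
      by_contra hcon
      push_neg at hcon
      have h5 : ((2:ℝ≥0∞)⁻¹)^2 ≤ a^2 := pow_le_pow_left' hcon 2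
      have h2 : R x < ((2:ℝ≥0∞)⁻¹)^2 := hquarter ▸ hR
      have h3 : a^2 ≤ R x := by rw [hsplitR]; exact le_self_add
      exact absurd (lt_of_le_of_lt (h5.trans h3) h2) (lt_irrefl _)
    have htriangle : (1:ℝ≥0∞) ≤ a + b := by
      have h1 : ‖(1:ℂ)‖₊ ≤ ‖(1:ℂ) - W (x,1)‖₊ + ‖W (x,1)‖₊ := by
        calc ‖(1:ℂ)‖₊ = ‖((1:ℂ) - W (x,1)) + W (x,1)‖₊ := by rw [sub_add_cancel]
          _ ≤ _ := nnnorm_add_le _ _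
      have h2 : ((‖(1:ℂ)‖₊ : ℝ≥0∞)) ≤ a + b := by
        rw [hadef, hbdef, ← ENNReal.coe_add]
        exact_mod_cast h1
      simpa using h2
    have hblt : (2:ℝ≥0∞)⁻¹ < b := by
      by_contra hcon
      push_neg at hcon
      have h1 : a + b < 2⁻¹ + 2⁻¹ :=
        lt_of_le_of_lt (add_le_add_right hcon a)
          (ENNReal.add_lt_add_right (ENNReal.inv_ne_top.mpr (by norm_num)) halt)
      rw [ENNReal.inv_two_add_inv_two] at h1
      exact absurd (lt_of_le_of_lt htriangle h1) (lt_irrefl _)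
    have hrb : r < b^2 := by
      have h1 : r ≤ R x := by rw [hsplitR]; exact le_add_self
      have h2 : R x < ((2:ℝ≥0∞)⁻¹)^2 := hquarter ▸ hR
      have h3 : ((2:ℝ≥0∞)⁻¹)^2 < b^2 := ENNReal.pow_lt_pow_left (by norm_num) hblt
      exact lt_trans (lt_of_le_of_lt h1 h2) h3
    show x ∈ S 1
    rw [hSdef]
    simp only [Set.mem_setOf_eq]
    rw [hsplitP]
    calc b^2 + r < b^2 + b^2 :=
          ENNReal.add_lt_add_left (ENNReal.pow_ne_top ENNReal.coe_ne_top) hrb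
      _ = 2 * b^2 := (two_mul _).symm
  -- conclusion about {f = 1}
  have hgoal3 : ENNReal.ofReal (3/4) < μ {x | f x = 1} :=
    lt_of_lt_of_le hAc (measure_mono (fun x hx => hfS x 1 (hGS x hx)))
  -- D is conull
  have hDmeas : MeasurableSet D := by
    have h0 : D = ⋃ l, S l := by
      ext x; simp only [hDdef, Set.mem_setOf_eq, Set.mem_iUnion]
    rw [h0]; exact MeasurableSet.iUnion hSmeas
  set D' : Set X := ⋂ g : Γ, (fun x => g • x) ⁻¹' D with hD'def
  have hD'meas : MeasurableSet D' := MeasurableSet.iInter fun g => (hmp g).measurable hDmeas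
  have hD'sub : D' ⊆ D := fun x hx => by
    have h0 := Set.mem_iInter.mp hx 1
    simpa using h0
  have hD'inv : ∀ g : Γ, (fun x => g • x) ⁻¹' D' = D' := by
    intro g
    ext x
    simp only [Set.mem_preimage, hD'def, Set.mem_iInter]
    constructor
    · intro h k
      have h0 := h (k * g⁻¹)
      rwa [smul_smul, inv_mul_cancel_right] at h0
    · intro h k
      rw [smul_smul]
      exact h (k * g)
  have hDae : ∀ g : Γ, μ {x | x ∈ D ∧ g • x ∉ D} = 0 := by
    intro g
    have h0 : ∀ᵐ x ∂μ, ¬(x ∈ D ∧ g • x ∉ D) := by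
      filter_upwards [htrans g] with x hx
      rintro ⟨⟨l, hl⟩, hnd⟩
      exact hnd ⟨_, (hx l).mp hl⟩
    have h1 := ae_iff.mp h0
    simpa only [not_not] using h1
  have hDD' : μ (D \ D') = 0 := by
    have hsub : D \ D' ⊆ ⋃ g : Γ, {x | x ∈ D ∧ g • x ∉ D} := by
      rintro x ⟨hxD, hxD'⟩
      rw [hD'def, Set.mem_iInter] at hxD'
      push_neg at hxD'
      obtain ⟨g, hg⟩ := hxD'
      exact Set.mem_iUnion.mpr ⟨g, hxD, hg⟩
    exact measure_mono_null hsub (measure_iUnion_null fun g => hDae g)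
  have hμD'D : μ D' = μ D := by
    refine le_antisymm (measure_mono hD'sub) ?_
    calc μ D ≤ μ (D' ∪ (D \ D')) := measure_mono (fun x hx => by
          by_cases h : x ∈ D'
          · exact Or.inl h
          · exact Or.inr ⟨hx, h⟩)
      _ ≤ μ D' + μ (D \ D') := measure_union_le _ _
      _ = μ D' := by rw [hDD', add_zero]
  have hD'pos : μ D' ≠ 0 := by
    have h1 : ENNReal.ofReal (3/4) < μ D :=
      lt_of_lt_of_le hAc (measure_mono (fun x hx => ⟨1, hGS x hx⟩))
    rw [hμD'D]
    intro h0
    rw [h0] at h1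
    exact absurd h1 (by simp)
  have hD'1 : μ D' = 1 := (herg D' hD'meas hD'inv).resolve_left hD'pos
  have hD'conull : ∀ᵐ x ∂μ, x ∈ D' := by
    rw [ae_iff]
    have h0 : μ D'ᶜ = 0 := by
      rw [measure_compl hD'meas (measure_ne_top μ D'), hD'1, measure_univ, tsub_self]
    exact h0
  -- conclusion
  refine ⟨f, hfmeas, ?_, hgoal3⟩
  intro g
  filter_upwards [htrans g, hD'conull] with x hx hxD'
  obtain ⟨l, hl⟩ := hD'sub hxD'
  have hfx : f x = l := hfS x l hl
  have hfgx : f (g • x) = α g x * l * (β g x)⁻¹ := hfS _ _ ((hx l).mp hl)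
  rw [hfgx, hfx]
  group
end

section
/- Let K be a compact second countable group with Haar probability measure m_K, Γ ↷ K an action by left translations through a dense homomorphism τ : Γ → K, Λ a group, and c : Γ × K → Λ a cocycle. For t ∈ K define the deformed cocycle c_t(g, x) = c(g, x t⁻¹). Suppose for t, s with t, s, ts in some subset U ⊆ K there exist measurable maps f_t, f_s, f_{ts} : K → Λ with c_r = c^{f_r} (i.e., c_r(g,x) = f_r(gx) c(g,x) f_r(x)⁻¹) for r ∈ {t, s, ts}, each satisfying m_K{x : f_r(x) = e} > 3/4, and Γ ↷ (K, m_K) is ergodic. Then the conjugating maps satisfy the cocycle equation f_{ts}(x) = f_t(x s⁻¹) f_s(x) for a.e. x ∈ K. -/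
open MeasureTheory
open scoped ENNReal

/-- **The conjugating maps of deformed cocycles satisfy the cocycle equation
(deformation/rigidity step in the proof of cocycle superrigidity for isometric
actions).**  Let `K` be a compact second countable group with Haar probability measure
`m_K`, `Γ ↷ K` by left translation via a dense homomorphism `τ : Γ → K` which is an
ergodic action, `Λ` a countable group, and `c : Γ × K → Λ` a cocycle.  For `t ∈ K` let
`c_t (g, x) = c (g, x t⁻¹)` be the deformed cocycle.  Suppose for `t`, `s` and `ts`
there are measurable maps `f_t, f_s, f_{ts} : K → Λ` with `c_r = c^{f_r}`, i.e.
`c_r (g, x) = f_r (gx) · c(g,x) · f_r(x)⁻¹` a.e., and `m_K {x : f_r x = e} > 3/4` for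
each `r ∈ {t, s, ts}`.  Then `f_{ts}(x) = f_t(x s⁻¹) · f_s(x)` for a.e. `x ∈ K`. -/
theorem deformed_cocycle_conjugators_cocycle_eq
    {Γ : Type*} [Group Γ] [Countable Γ]
    {K : Type*} [Group K] [TopologicalSpace K] [IsTopologicalGroup K]
    [CompactSpace K] [SecondCountableTopology K] [MeasurableSpace K] [BorelSpace K]
    (μ : Measure K) [IsProbabilityMeasure μ]
    [μ.IsMulLeftInvariant] [μ.IsMulRightInvariant]
    (τ : Γ →* K) (hτdense : DenseRange τ)
    (herg : ∀ S : Set K, MeasurableSet S →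
      (∀ g : Γ, (fun x : K => τ g * x) ⁻¹' S = S) → μ S = 0 ∨ μ S = 1)
    {Λ : Type*} [Group Λ] [Countable Λ] [MeasurableSpace Λ] [DiscreteMeasurableSpace Λ]
    (c : Γ → K → Λ) (hcmeas : ∀ g, Measurable (c g))
    (hcoc : ∀ g₂ g₁ : Γ, ∀ᵐ x ∂μ, c (g₂ * g₁) x = c g₂ (τ g₁ * x) * c g₁ x)
    (t s : K) (ft fs fts : K → Λ)
    (hftmeas : Measurable ft) (hfsmeas : Measurable fs) (hftsmeas : Measurable fts)
    (hft : ∀ g : Γ, ∀ᵐ x ∂μ, c g (x * t⁻¹) = ft (τ g * x) * c g x * (ft x)⁻¹)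
    (hfs : ∀ g : Γ, ∀ᵐ x ∂μ, c g (x * s⁻¹) = fs (τ g * x) * c g x * (fs x)⁻¹)
    (hfts : ∀ g : Γ, ∀ᵐ x ∂μ,
      c g (x * (t * s)⁻¹) = fts (τ g * x) * c g x * (fts x)⁻¹)
    (hft34 : (3 / 4 : ℝ≥0∞) < μ {x | ft x = 1})
    (hfs34 : (3 / 4 : ℝ≥0∞) < μ {x | fs x = 1})
    (hfts34 : (3 / 4 : ℝ≥0∞) < μ {x | fts x = 1}) :
    ∀ᵐ x ∂μ, fts x = ft (x * s⁻¹) * fs x := by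
  classical
  set F : K → Λ := fun x => (fts x)⁻¹ * (ft (x * s⁻¹) * fs x) with hFdef
  have hFmeas : Measurable F :=
    (hftsmeas.inv).mul ((hftmeas.comp (measurable_mul_const s⁻¹)).mul hfsmeas)
  -- key a.e. conjugation relation
  have key : ∀ g : Γ, ∀ᵐ x ∂μ, F (τ g * x) = c g x * F x * (c g x)⁻¹ := by
    intro g
    have h3 : ∀ᵐ x ∂μ, c g (x * s⁻¹ * t⁻¹)
        = ft (τ g * (x * s⁻¹)) * c g (x * s⁻¹) * (ft (x * s⁻¹))⁻¹ :=
      (measurePreserving_mul_right μ s⁻¹).quasiMeasurePreserving.ae (hft g)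
    filter_upwards [hfts g, hfs g, h3] with x e1 e2 e3
    have hx1 : x * (t * s)⁻¹ = x * s⁻¹ * t⁻¹ := by
      rw [mul_inv_rev, mul_assoc]
    have hx2 : τ g * (x * s⁻¹) = τ g * x * s⁻¹ := by rw [mul_assoc]
    rw [hx1] at e1
    rw [hx2, e2] at e3
    rw [e3] at e1
    -- e1 : ft (τg*x*s⁻¹) * (fs (τg*x) * c g x * (fs x)⁻¹) * (ft (x*s⁻¹))⁻¹
    --      = fts (τg*x) * c g x * (fts x)⁻¹
    set a := fts (τ g * x)
    set b := c g x
    set d := fts x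
    set p := ft (τ g * x * s⁻¹)
    set q := fs (τ g * x)
    set r := fs x
    set u := ft (x * s⁻¹)
    have h2 : p * q = (p * (q * b * r⁻¹) * u⁻¹) * (u * r * b⁻¹) := by group
    rw [e1] at h2
    show a⁻¹ * (p * q) = b * (d⁻¹ * (u * r)) * b⁻¹
    rw [h2]; group
  have keyIff : ∀ᵐ x ∂μ, ∀ g : Γ, (F (τ g * x) = 1 ↔ F x = 1) := by
    rw [ae_all_iff]
    intro g
    filter_upwards [key g] with x hx
    rw [hx, mul_inv_eq_one, mul_eq_left]
  -- the set where F = 1 and the strictly invariant intersection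
  set A : Set K := {x | F x = 1} with hAdef
  have hAmeas : MeasurableSet A := hFmeas (measurableSet_singleton 1)
  set S : Set K := ⋂ g : Γ, (fun x => τ g * x) ⁻¹' A with hSdef
  have hSmeas : MeasurableSet S :=
    MeasurableSet.iInter fun g => (measurable_const_mul (τ g)) hAmeas
  have hSinv : ∀ h : Γ, (fun x : K => τ h * x) ⁻¹' S = S := by
    intro h
    ext x
    simp only [hSdef, Set.mem_iInter, Set.mem_preimage]
    constructor
    · intro hx g
      have := hx (g * h⁻¹)
      rwa [show τ (g * h⁻¹) * (τ h * x) = τ g * x by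
        rw [← mul_assoc, ← map_mul, mul_assoc, inv_mul_cancel, mul_one]] at this
    · intro hx g
      have := hx (g * h)
      rwa [show τ g * (τ h * x) = τ (g * h) * x by rw [← mul_assoc, ← map_mul]]
  -- measure of A is positive
  have hmid : μ {x | ft (x * s⁻¹) = 1} = μ {x | ft x = 1} := by
    have : {x : K | ft (x * s⁻¹) = 1} = (fun h : K => h * s⁻¹) ⁻¹' {x | ft x = 1} := rfl
    rw [this, measure_preimage_mul_right]
  have hsub : {x | fts x = 1} ∩ ({x | ft (x * s⁻¹) = 1} ∩ {x | fs x = 1}) ⊆ A := by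
    rintro x ⟨h1, h2, h3⟩
    have e1 : fts x = 1 := h1
    have e2 : ft (x * s⁻¹) = 1 := h2
    have e3 : fs x = 1 := h3
    show F x = 1
    show (fts x)⁻¹ * (ft (x * s⁻¹) * fs x) = 1
    rw [e1, e2, e3]; group
  have h44 : ((4 : ℝ≥0∞)/4) = 1 := ENNReal.div_self (by norm_num) (by norm_num)
  have hcompl : ∀ B : Set K, MeasurableSet B → (3/4 : ℝ≥0∞) < μ B → μ Bᶜ ≤ 1/4 := by
    intro B hBm hB
    calc μ Bᶜ = 1 - μ B := prob_compl_eq_one_sub hBm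
      _ ≤ 1 - 3/4 := tsub_le_tsub_left hB.le 1
      _ ≤ 1/4 := by
          rw [tsub_le_iff_right, ENNReal.div_add_div_same]
          norm_num [h44]
  have hApos : μ A ≠ 0 := by
    have hAc : μ Aᶜ ≤ 3/4 := by
      have h1 : Aᶜ ⊆ {x | fts x = 1}ᶜ ∪ ({x | ft (x * s⁻¹) = 1}ᶜ ∪ {x | fs x = 1}ᶜ) := by
        rw [← Set.compl_inter, ← Set.compl_inter]
        exact Set.compl_subset_compl.mpr hsub
      calc μ Aᶜ ≤ μ {x | fts x = 1}ᶜ + (μ {x | ft (x * s⁻¹) = 1}ᶜ + μ {x | fs x = 1}ᶜ) :=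
            le_trans (measure_mono h1) (le_trans (measure_union_le _ _)
              (add_le_add le_rfl (measure_union_le _ _)))
        _ ≤ 1/4 + (1/4 + 1/4) := by
            have m1 : MeasurableSet {x : K | fts x = 1} := hftsmeas (measurableSet_singleton 1)
            have m2 : MeasurableSet {x : K | ft (x * s⁻¹) = 1} :=
              (hftmeas.comp (measurable_mul_const s⁻¹)) (measurableSet_singleton 1)
            have m3 : MeasurableSet {x : K | fs x = 1} := hfsmeas (measurableSet_singleton 1)
            refine add_le_add (hcompl _ m1 hfts34)
              (add_le_add (hcompl _ m2 ?_) (hcompl _ m3 hfs34))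
            rwa [hmid]
        _ = 3/4 := by rw [ENNReal.div_add_div_same, ENNReal.div_add_div_same]; norm_num
    intro h0
    rw [prob_compl_eq_one_sub hAmeas, h0, tsub_zero] at hAc
    have h34 : (3/4 : ℝ≥0∞) < 1 := by
      rw [ENNReal.div_lt_iff (by norm_num) (by norm_num)]
      norm_num
    exact absurd (lt_of_le_of_lt hAc h34) (lt_irrefl 1)
  -- A \ S is null
  have hAS : μ (A \ S) = 0 := by
    refine measure_mono_null ?_ (ae_iff.mp keyIff)
    rintro x ⟨hxA, hxS⟩
    simp only [hSdef, Set.mem_iInter, Set.mem_preimage] at hxS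
    intro hiff
    exact hxS fun g => (hiff g).mpr hxA
  have hSpos : μ S ≠ 0 := by
    intro h0
    have hle : μ A ≤ μ S + μ (A \ S) :=
      le_trans (measure_mono (fun x hx => by
        by_cases hxS : x ∈ S
        · exact Set.mem_union_left _ hxS
        · exact Set.mem_union_right _ ⟨hx, hxS⟩)) (measure_union_le _ _)
    rw [h0, hAS, add_zero] at hle
    exact hApos (le_antisymm hle (by positivity))
  have hS1 : μ S = 1 := (herg S hSmeas hSinv).resolve_left hSpos
  have hSae : ∀ᵐ x ∂μ, x ∈ S := by
    rw [ae_iff]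
    show μ Sᶜ = 0
    rw [prob_compl_eq_one_sub hSmeas, hS1, tsub_self]
  filter_upwards [hSae] with x hx
  have hx1 : F x = 1 := by
    have := Set.mem_iInter.mp hx 1
    exact (by simpa [map_one] using this : x ∈ A)
  have : (fts x)⁻¹ * (ft (x * s⁻¹) * fs x) = 1 := hx1
  exact inv_mul_eq_one.mp this
end
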